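/- For every integer s ≥ 1 and every rational number x with x ≠ −1, the polynomial 𝓕_s satisfies 𝓕_s(x) = (1/(x+1)) · Li_{−s}(x/(1+x)), where the right-hand side is the value at x/(1+x) of the rational function Li_{−s} (note x/(1+x) ≠ 1, so this value is a well-defined rational number). -/

import Mathlib

open Finset Polynomial

/-- `Li s` is the polylogarithm of negative index, `Li_{-s}(x) = (x d/dx)^s (x/(1-x))`,
viewed as a function `ℚ → ℚ` (well defined away from `x = 1`). -/
noncomputable def Li (s : ℕ) : ℚ → ℚ :=
  (fun f x => x * deriv f x)^[s] (fun x => x / (1 - x))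

/-- `zLocSpan q c x` means `x ∈ c·ℤ_(q)`, i.e. `x = c·(a/b)` with `q ∤ b`. -/
def zLocSpan (q : ℕ) (c x : ℚ) : Prop :=
  ∃ a b : ℤ, ¬ (q : ℤ) ∣ b ∧ x * (b : ℚ) = c * (a : ℚ)

/-- The integer coefficient `Σ_{1≤j,k,l≤q−1, k ≡ jl (mod q)} (−1)^k C(t,k)·j·l`. -/
def fqCoeff (q t : ℕ) : ℤ :=
  ∑ j ∈ Finset.Icc 1 (q-1), ∑ k ∈ Finset.Icc 1 (q-1), ∑ l ∈ Finset.Icc 1 (q-1),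
    if (k : ZMod q) = (j : ZMod q) * (l : ZMod q) then (-1)^k * (t.choose k : ℤ) * j * l else 0

/-- The polynomial `f_q(x) = Σ_{t=1}^q fqCoeff q t · x^t / t ∈ ℚ[x]` (in fact in `ℤ_(q)[x]`). -/
noncomputable def fqPoly (q : ℕ) : Polynomial ℚ :=
  ∑ t ∈ Finset.Icc 1 q, Polynomial.C ((fqCoeff q t : ℚ) / (t : ℚ)) * Polynomial.X ^ t

/-- Reduction of a rational with denominator prime to `N` to `ZMod N`. -/
def ratToZMod (N : ℕ) (x : ℚ) : ZMod N := (x.num : ZMod N) * ((x.den : ℕ) : ZMod N)⁻¹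

/-- The set `S_q = { a − f_q(a) mod q² : a = 0,…,q−1 } ⊆ ℤ/q²ℤ`. -/
def Sq (q : ℕ) : Set (ZMod (q^2)) :=
  { y | ∃ a : ℕ, a < q ∧ y = ratToZMod (q^2) ((a : ℚ) - (fqPoly q).eval (a : ℚ)) }

/-- Congruence modulo the ideal of `ℤ[ζ]` generated by `(1-ζ)^e`, for elements of `ℂ`. -/
def congZeta (ζ : ℂ) (e : ℕ) (x y : ℂ) : Prop :=
  ∃ P : Polynomial ℤ, x - y = (1 - ζ)^e * (Polynomial.aeval ζ P)

/-- `jstar q j` is the representative in `[0, q-1]` of the inverse of `j` mod `q`. -/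
def jstar (q j : ℕ) : ℕ := ((j : ZMod q)⁻¹).val

/-- `istar q a` is the representative in `[0, q-1]` of the inverse of the integer `a` mod `q`. -/
def istar (q : ℕ) (a : ℤ) : ℕ := ((a : ZMod q)⁻¹).val

/-- `μ^{(i)} = ζ^i · ∏_{j=1}^{q−1} (m − n ζ^j)^{j*} ∈ ℤ[ζ_q] ⊆ ℂ`. -/
noncomputable def mu (q : ℕ) (m n : ℤ) (i : ℕ) (ζ : ℂ) : ℂ :=
  ζ^i * ∏ j ∈ Finset.Icc 1 (q-1), ((m : ℂ) - (n : ℂ) * ζ^j)^(jstar q j)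

/-- `𝓕_s(x) = Σ_{t=0}^s Σ_{s₁,…,s_t ≥ 1, s₁+⋯+s_t=s} s!/(s₁!⋯s_t!) x^t`, as a function `ℚ → ℚ`. -/
def Fcal (s : ℕ) (x : ℚ) : ℚ :=
  ∑ t ∈ Finset.range (s+1),
    ∑ c ∈ (Finset.Nat.antidiagonalTuple t s).filter (fun c => ∀ i, 1 ≤ c i),
      (Nat.multinomial Finset.univ c : ℚ) * x ^ t

/-- Coefficientwise reduction of `f_q` mod `q²`. -/
noncomputable def fqBar (q : ℕ) : Polynomial (ZMod (q^2)) :=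
  ∑ t ∈ Finset.Icc 1 q,
    Polynomial.C (ratToZMod (q^2) ((fqCoeff q t : ℚ) / (t : ℚ))) * Polynomial.X ^ t


/-- Surjection numbers by recurrence. -/
def Asur : ℕ → ℕ → ℕ
  | 0, 0 => 1
  | 0, _+1 => 0
  | _+1, 0 => 0
  | s+1, t+1 => (t+1) * (Asur s (t+1) + Asur s t)

lemma Asur_eq_zero : ∀ s t : ℕ, s < t → Asur s t = 0 := by
  intro s
  induction s with
  | zero => intro t ht; cases t with
    | zero => omega
    | succ t => rfl
  | succ s ih =>
    intro t ht
    cases t with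
    | zero => omega
    | succ t =>
      show (t+1) * (Asur s (t+1) + Asur s t) = 0
      rw [ih (t+1) (by omega), ih t (by omega)]
      ring

/-- The rational multinomial. -/
noncomputable def mult' {n : ℕ} (c : Fin n → ℕ) : ℚ :=
  ((∑ i, c i).factorial : ℚ) / ∏ i, ((c i).factorial : ℚ)

lemma prod_factorial_ne_zero {n : ℕ} (c : Fin n → ℕ) :
    (∏ i, ((c i).factorial : ℚ)) ≠ 0 :=
  Finset.prod_ne_zero_iff.2 fun i _ => Nat.cast_ne_zero.2 (c i).factorial_ne_zero

lemma cast_multinomial {n : ℕ} (c : Fin n → ℕ) :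
    (Nat.multinomial Finset.univ c : ℚ) = mult' c := by
  have h := Nat.multinomial_spec Finset.univ c
  rw [mult', eq_div_iff (prod_factorial_ne_zero c), mul_comm]
  exact_mod_cast congrArg (Nat.cast (R := ℚ)) h

/-- The inner sum in `Fcal`. -/
noncomputable def Scomb (s t : ℕ) : ℚ :=
  ∑ c ∈ (Finset.Nat.antidiagonalTuple t s).filter (fun c => ∀ i, 1 ≤ c i),
    (Nat.multinomial Finset.univ c : ℚ)

lemma mult'_rec {n : ℕ} (c : Fin (n+1) → ℕ) (hc : ∀ i, 1 ≤ c i) :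
    mult' c = ∑ i : Fin (n+1), mult' (Function.update c i (c i - 1)) := by
  have hN : 1 ≤ ∑ i, c i := le_trans (hc 0) (Finset.single_le_sum (f := c) (fun i _ => Nat.zero_le _) (mem_univ 0))
  have key : ∀ i : Fin (n+1), mult' (Function.update c i (c i - 1))
      = (c i : ℚ) * ((∑ j, c j - 1).factorial : ℚ) / ∏ j, ((c j).factorial : ℚ) := by
    intro i
    have hsum : ∑ j, Function.update c i (c i - 1) j = (∑ j, c j) - 1 := by
      rw [Finset.sum_update_of_mem (mem_univ i)]
      have := hc i
      have h2 := Finset.sum_eq_sum_sdiff_singleton_add (mem_univ i) c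
      omega
    have hprod : ∏ j, ((Function.update c i (c i - 1) j).factorial : ℚ)
        = ((c i - 1).factorial : ℚ) * ∏ j ∈ univ \ {i}, ((c j).factorial : ℚ) := by
      have hcomp : (fun j => ((Function.update c i (c i - 1) j).factorial : ℚ))
          = Function.update (fun j => ((c j).factorial : ℚ)) i (((c i - 1).factorial : ℚ)) := by
        funext j
        rcases eq_or_ne j i with h | h
        · subst h; simp
        · simp [Function.update_of_ne h]
      rw [show (∏ j, ((Function.update c i (c i - 1) j).factorial : ℚ))
          = ∏ j, Function.update (fun j => ((c j).factorial : ℚ)) i (((c i - 1).factorial : ℚ)) j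
          from by rw [← hcomp]]
      exact Finset.prod_update_of_mem (mem_univ i) _ _
    have hfac : ((c i).factorial : ℚ) = (c i : ℚ) * ((c i - 1).factorial : ℚ) := by
      obtain ⟨k, hk⟩ : ∃ k, c i = k + 1 := ⟨c i - 1, by have := hc i; omega⟩
      rw [hk]; push_cast [Nat.factorial_succ]; ring
    have hprodall : ∏ j, ((c j).factorial : ℚ)
        = ((c i).factorial : ℚ) * ∏ j ∈ univ \ {i}, ((c j).factorial : ℚ) := by
      rw [Finset.prod_eq_prod_diff_singleton_mul (mem_univ i) (fun j => ((c j).factorial : ℚ))]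
      ring
    have hpne : (∏ j ∈ univ \ {i}, ((c j).factorial : ℚ)) ≠ 0 :=
      Finset.prod_ne_zero_iff.2 fun j _ => Nat.cast_ne_zero.2 (c j).factorial_ne_zero
    have hcine : ((c i - 1).factorial : ℚ) ≠ 0 := Nat.cast_ne_zero.2 (Nat.factorial_ne_zero _)
    have hcne : (c i : ℚ) ≠ 0 := Nat.cast_ne_zero.2 (by have := hc i; omega)
    rw [mult', hsum, hprod, hprodall, hfac]
    field_simp
  rw [Finset.sum_congr rfl (fun i _ => key i)]
  rw [← Finset.sum_div, ← Finset.sum_mul, mult']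
  congr 1
  have : ((∑ j, c j).factorial : ℚ) = (∑ j, c j : ℕ) * ((∑ j, c j - 1).factorial : ℚ) := by
    obtain ⟨k, hk⟩ : ∃ k, ∑ j, c j = k + 1 := ⟨∑ j, c j - 1, by omega⟩
    rw [hk]; push_cast [Nat.factorial_succ]; ring
  rw [this]; push_cast; ring

lemma Scomb_eq_mult' (s t : ℕ) :
    Scomb s t = ∑ c ∈ (Finset.Nat.antidiagonalTuple t s).filter (fun c => ∀ i, 1 ≤ c i),
      mult' c :=
  Finset.sum_congr rfl fun c _ => cast_multinomial c

lemma Scomb_succ_succ (s t : ℕ) :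
    Scomb (s+1) (t+1) = (t+1 : ℚ) * (Scomb s (t+1) + Scomb s t) := by
  classical
  rw [Scomb_eq_mult']
  set F := (Finset.Nat.antidiagonalTuple (t+1) (s+1)).filter (fun c => ∀ i, 1 ≤ c i) with hF
  have step1 : ∑ c ∈ F, mult' c
      = ∑ c ∈ F, ∑ i : Fin (t+1), mult' (Function.update c i (c i - 1)) := by
    refine Finset.sum_congr rfl fun c hc => ?_
    exact mult'_rec c (Finset.mem_filter.1 hc).2
  rw [step1, Finset.sum_comm]
  have step3 : ∀ i : Fin (t+1),
      ∑ c ∈ F, mult' (Function.update c i (c i - 1)) = Scomb s (t+1) + Scomb s t := by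
    intro i
    set D := (Finset.Nat.antidiagonalTuple (t+1) s).filter (fun d => ∀ j, j ≠ i → 1 ≤ d j) with hD
    have bij1 : ∑ c ∈ F, mult' (Function.update c i (c i - 1)) = ∑ d ∈ D, mult' d := by
      refine Finset.sum_nbij' (fun c => Function.update c i (c i - 1))
        (fun d => Function.update d i (d i + 1)) ?_ ?_ ?_ ?_ ?_
      · intro c hc
        obtain ⟨hmem, hpos⟩ := Finset.mem_filter.1 hc
        rw [Finset.Nat.mem_antidiagonalTuple] at hmem
        refine Finset.mem_filter.2 ⟨Finset.Nat.mem_antidiagonalTuple.2 ?_, ?_⟩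
        · rw [Finset.sum_update_of_mem (mem_univ i)]
          have h2 := Finset.sum_eq_sum_sdiff_singleton_add (mem_univ i) c
          have := hpos i
          omega
        · intro j hj
          rw [Function.update_of_ne hj]
          exact hpos j
      · intro d hd
        obtain ⟨hmem, hpos⟩ := Finset.mem_filter.1 hd
        rw [Finset.Nat.mem_antidiagonalTuple] at hmem
        refine Finset.mem_filter.2 ⟨Finset.Nat.mem_antidiagonalTuple.2 ?_, ?_⟩
        · rw [Finset.sum_update_of_mem (mem_univ i)]
          have h2 := Finset.sum_eq_sum_sdiff_singleton_add (mem_univ i) d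
          omega
        · intro j
          rcases eq_or_ne j i with h | h
          · subst h; rw [Function.update_self]; omega
          · rw [Function.update_of_ne h]; exact hpos j h
      · intro c hc
        obtain ⟨_, hpos⟩ := Finset.mem_filter.1 hc
        funext j
        rcases eq_or_ne j i with h | h
        · subst h
          rw [Function.update_self, Function.update_self]
          have := hpos j
          omega
        · rw [Function.update_of_ne h, Function.update_of_ne h]
      · intro d _
        funext j
        rcases eq_or_ne j i with h | h
        · subst h
          rw [Function.update_self, Function.update_self]
          omega
        · rw [Function.update_of_ne h, Function.update_of_ne h]
      · intro c _; rfl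
    rw [bij1]
    rw [← Finset.sum_filter_add_sum_filter_not D (fun d => 1 ≤ d i)]
    congr 1
    · rw [Scomb_eq_mult', hD, Finset.filter_filter]
      refine Finset.sum_congr (Finset.filter_congr fun d _ => ?_) fun _ _ => rfl
      constructor
      · rintro ⟨h1, h2⟩ j
        rcases eq_or_ne j i with h | h
        · subst h; exact h2
        · exact h1 j h
      · intro h; exact ⟨fun j _ => h j, h i⟩
    · rw [Scomb_eq_mult']
      refine Finset.sum_nbij' (fun d => Fin.removeNth i d) (fun c => Fin.insertNth i 0 c)
        ?_ ?_ ?_ ?_ ?_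
      · intro d hd
        obtain ⟨hd1, hd0⟩ := Finset.mem_filter.1 hd
        obtain ⟨hmem, hpos⟩ := Finset.mem_filter.1 hd1
        rw [Finset.Nat.mem_antidiagonalTuple] at hmem
        have hdi : d i = 0 := by omega
        refine Finset.mem_filter.2 ⟨Finset.Nat.mem_antidiagonalTuple.2 ?_, ?_⟩
        · have := Fin.sum_univ_succAbove d i
          rw [hdi, zero_add] at this
          rw [show ∑ k : Fin t, i.removeNth d k = ∑ k : Fin t, d (i.succAbove k) from rfl,
            ← this]
          exact hmem
        · intro k
          exact hpos (i.succAbove k) (Fin.succAbove_ne i k)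
      · intro c hc
        obtain ⟨hmem, hpos⟩ := Finset.mem_filter.1 hc
        rw [Finset.Nat.mem_antidiagonalTuple] at hmem
        refine Finset.mem_filter.2 ⟨Finset.mem_filter.2 ⟨Finset.Nat.mem_antidiagonalTuple.2 ?_, ?_⟩, ?_⟩
        · rw [Fin.sum_univ_succAbove (i.insertNth 0 c) i, Fin.insertNth_apply_same, zero_add]
          rw [← hmem]
          exact Finset.sum_congr rfl fun k _ => by rw [Fin.insertNth_apply_succAbove]
        · intro j hj
          obtain ⟨k, rfl⟩ := Fin.exists_succAbove_eq hj
          rw [Fin.insertNth_apply_succAbove]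
          exact hpos k
        · simp
      · intro d hd
        obtain ⟨hd1, hd0⟩ := Finset.mem_filter.1 hd
        have hdi : d i = 0 := by omega
        have := Fin.insertNth_self_removeNth i d
        rw [hdi] at this
        exact this
      · intro c _
        funext k
        dsimp only [Fin.removeNth]
        rw [Fin.insertNth_apply_succAbove]
      · intro d hd
        obtain ⟨hd1, hd0⟩ := Finset.mem_filter.1 hd
        have hdi : d i = 0 := by omega
        unfold mult'
        congr 1
        · congr 1
          have := Fin.sum_univ_succAbove d i
          rw [hdi, zero_add] at this
          rw [show ∑ k : Fin t, (fun d => i.removeNth d) d k = ∑ k : Fin t, d (i.succAbove k)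
            from rfl, ← this]
        · have := Fin.prod_univ_succAbove (fun j => (((d j).factorial : ℚ))) i
          rw [show ∏ k : Fin t, (((fun d => i.removeNth d) d k).factorial : ℚ)
            = ∏ k : Fin t, ((d (i.succAbove k)).factorial : ℚ) from rfl]
          rw [this, hdi]
          simp
  rw [Finset.sum_congr rfl fun i _ => step3 i, Finset.sum_const, Finset.card_univ,
    Fintype.card_fin, nsmul_eq_mul]
  push_cast
  ring

theorem Scomb_eq_Asur : ∀ s t : ℕ, Scomb s t = (Asur s t : ℚ) := by
  intro s
  induction s with
  | zero =>
    intro t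
    cases t with
    | zero =>
      rw [Scomb]
      rw [Finset.Nat.antidiagonalTuple_zero_zero]
      simp [show Asur 0 0 = 1 from rfl]
    | succ t =>
      rw [Scomb]
      rw [Finset.Nat.antidiagonalTuple_zero_right]
      rw [show (Asur 0 (t+1) : ℚ) = 0 from by rfl]
      rw [Finset.filter_singleton]
      simp
  | succ s ih =>
    intro t
    cases t with
    | zero =>
      rw [Scomb, Finset.Nat.antidiagonalTuple_zero_succ]
      simp [Asur]
    | succ t =>
      rw [Scomb_succ_succ, ih (t+1), ih t,
        show Asur (s+1) (t+1) = (t+1) * (Asur s (t+1) + Asur s t) from rfl]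
      push_cast
      ring

noncomputable def Gfun (s : ℕ) (y : ℚ) : ℚ :=
  ∑ t ∈ Finset.range (s+1), (Asur s t : ℚ) * (y^t * ((1-y)^(t+1))⁻¹)

lemma term_hasDerivAt (t : ℕ) (y : ℚ) (hy : y ≠ 1) :
    HasDerivAt (fun y : ℚ => y^t * ((1-y)^(t+1))⁻¹)
      ((t : ℚ) * y^(t-1) * ((1-y)^(t+1))⁻¹ + ((t : ℚ)+1) * y^t * ((1-y)^(t+2))⁻¹) y := by
  have h1y : (1 : ℚ) - y ≠ 0 := sub_ne_zero.2 (Ne.symm hy)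
  have hp : HasDerivAt (fun y : ℚ => y^t) ((t:ℚ) * y^(t-1)) y := hasDerivAt_pow t y
  have hq : HasDerivAt (fun y : ℚ => (1-y)^(t+1))
      (((t+1 : ℕ):ℚ) * (1-y)^(t+1-1) * (-1)) y :=
    ((hasDerivAt_id y).const_sub 1).pow (t+1)
  have hinv := hq.fun_inv (pow_ne_zero (t+1) h1y)
  have hmul := hp.fun_mul hinv
  refine hmul.congr_deriv ?_
  push_cast [Nat.add_sub_cancel]
  field_simp
  ring

lemma Gfun_hasDerivAt (s : ℕ) (y : ℚ) (hy : y ≠ 1) :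
    HasDerivAt (Gfun s) (∑ t ∈ Finset.range (s+1), (Asur s t : ℚ) *
      ((t : ℚ) * y^(t-1) * ((1-y)^(t+1))⁻¹ + ((t:ℚ)+1) * y^t * ((1-y)^(t+2))⁻¹)) y := by
  unfold Gfun
  exact HasDerivAt.fun_sum fun t _ => (term_hasDerivAt t y hy).const_mul _

lemma Li_succ (s : ℕ) (y : ℚ) : Li (s+1) y = y * deriv (Li s) y := by
  show (fun f x => x * deriv f x)^[s+1] _ y = _
  rw [Function.iterate_succ_apply']
  rfl

lemma Li_eq_Gfun : ∀ s, 1 ≤ s → ∀ y : ℚ, y ≠ 1 → Li s y = Gfun s y := by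
  intro s hs
  induction s, hs using Nat.le_induction with
  | base =>
    intro y hy
    have h1y : (1:ℚ) - y ≠ 0 := sub_ne_zero.2 (Ne.symm hy)
    have hd : HasDerivAt (fun x : ℚ => x / (1-x)) ((1*(1-y) - y*(-1))/(1-y)^2) y :=
      (hasDerivAt_id y).div ((hasDerivAt_id y).const_sub 1) h1y
    have h1 : Li 1 y = y * deriv (fun x : ℚ => x / (1-x)) y := by
      show (fun f x => x * deriv f x)^[1] _ y = _
      rw [Function.iterate_one]
    rw [h1, hd.deriv]
    unfold Gfun
    rw [Finset.sum_range_succ, Finset.sum_range_one]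
    rw [show Asur 1 0 = 0 from rfl, show Asur 1 1 = 1 from rfl]
    push_cast
    field_simp
    ring
  | succ s hs ih =>
    intro y hy
    have h1y : (1:ℚ) - y ≠ 0 := sub_ne_zero.2 (Ne.symm hy)
    rw [Li_succ]
    have hev : Li s =ᶠ[nhds y] Gfun s := by
      filter_upwards [isOpen_ne.mem_nhds hy] with z hz
      exact ih z hz
    rw [hev.deriv_eq, (Gfun_hasDerivAt s y hy).deriv]
    set P : ℕ → ℚ := fun t => (t:ℚ) * (Asur s t : ℚ) * y^t * ((1-y)^(t+1))⁻¹ with hP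
    set Q : ℕ → ℚ := fun t => ((t:ℚ)+1) * (Asur s t:ℚ) * y^(t+1) * ((1-y)^(t+2))⁻¹ with hQ
    set R : ℕ → ℚ := fun t => ((t:ℚ)+1) * (Asur s (t+1):ℚ) * y^(t+1) * ((1-y)^(t+2))⁻¹ with hR
    have hL : y * ∑ t ∈ Finset.range (s+1), (Asur s t : ℚ) *
        ((t : ℚ) * y^(t-1) * ((1-y)^(t+1))⁻¹ + ((t:ℚ)+1) * y^t * ((1-y)^(t+2))⁻¹)
        = ∑ t ∈ Finset.range (s+1), (P t + Q t) := by
      rw [Finset.mul_sum]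
      refine Finset.sum_congr rfl fun t _ => ?_
      rw [hP, hQ]
      cases t with
      | zero => push_cast; ring_nf
      | succ t =>
        dsimp only
        rw [Nat.add_sub_cancel]
        push_cast
        ring
    have hRHS : Gfun (s+1) y = ∑ t ∈ Finset.range (s+1), (R t + Q t) := by
      rw [Gfun, Finset.sum_range_succ' _ (s+1)]
      rw [show Asur (s+1) 0 = 0 from rfl]
      simp only [Nat.cast_zero, zero_mul, add_zero, Nat.cast_ofNat]
      refine Finset.sum_congr rfl fun t _ => ?_
      rw [show Asur (s+1) (t+1) = (t+1) * (Asur s (t+1) + Asur s t) from rfl]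
      simp only [hR, hQ]
      push_cast
      ring
    have hPR : ∑ t ∈ Finset.range (s+1), R t = ∑ t ∈ Finset.range (s+1), P t := by
      have h1 : ∀ t : ℕ, R t = P (t+1) := fun t => by
        simp only [hR, hP]; push_cast; ring
      rw [Finset.sum_congr rfl fun t _ => h1 t]
      have e1 := Finset.sum_range_succ' P (s+1)
      have e2 := Finset.sum_range_succ P (s+1)
      have hP0 : P 0 = 0 := by simp only [hP]; push_cast; ring
      have hPs : P (s+1) = 0 := by
        simp only [hP, Asur_eq_zero s (s+1) (by omega)]; push_cast; ring
      rw [hP0, add_zero] at e1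
      rw [hPs, add_zero] at e2
      rw [← e1, e2]
    rw [hL, hRHS, Finset.sum_add_distrib, Finset.sum_add_distrib, hPR]

theorem stmt15 (s : ℕ) (hs : 1 ≤ s) (x : ℚ) (hx : x ≠ -1) :
    Fcal s x = (1 / (x + 1)) * Li s (x / (1 + x)) := by
  have h1x : (1 : ℚ) + x ≠ 0 := fun h => hx (by linarith)
  have hsub : 1 - x / (1+x) = (1+x)⁻¹ := by field_simp; ring
  have hyne : x / (1+x) ≠ 1 := by
    intro h
    rw [h] at hsub
    simp only [sub_self] at hsub
    exact h1x (inv_eq_zero.1 hsub.symm)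
  rw [Li_eq_Gfun s hs _ hyne, Fcal, Gfun, Finset.mul_sum]
  refine Finset.sum_congr rfl fun t _ => ?_
  rw [← Finset.sum_mul]
  have hsc : (∑ c ∈ (Finset.Nat.antidiagonalTuple t s).filter (fun c => ∀ i, 1 ≤ c i),
      (Nat.multinomial Finset.univ c : ℚ)) = (Asur s t : ℚ) := Scomb_eq_Asur s t
  rw [hsc, hsub, div_pow, inv_pow, inv_inv]
  have key : x * (1 + x) ^ t + (1 + x) ^ t = (1 + x)^(t+1) := by ring
  field_simp
  rw [eq_div_iff (fun h => h1x (by linarith))]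
  ring
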